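/- Weak solutions of the one-dimensional periodic Burgers equation ∂_t u = ∂_x² u + u ∂_x u + f with u ∈ L²([0,T], H²) ∩ H¹([0,T], L²) and given initial data u(0) ∈ H¹ are unique. -/

import Mathlib

open Set Real MeasureTheory intervalIntegral

/-- Squared `H²` norm on the circle `[0, 2π)`. -/
noncomputable def H2sq (g : ℝ → ℝ) : ℝ :=
  ∫ x in (0:ℝ)..(2 * π), (g x) ^ 2 + (deriv g x) ^ 2 + (deriv (deriv g) x) ^ 2

/-- `u` is a solution of the periodic Burgers equation `∂_t u = ∂_x² u + u ∂_x u + f`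
on `[0,T]` in the regularity class `L²([0,T], H²) ∩ H¹([0,T], L²)`. -/
def IsBurgersSol (T : ℝ) (f u : ℝ → ℝ → ℝ) : Prop :=
  Continuous (Function.uncurry u) ∧
  (∀ t x, u t (x + 2 * π) = u t x) ∧
  (∀ t ∈ Set.Ioc (0:ℝ) T, ContDiff ℝ 2 (u t)) ∧
  (∀ t ∈ Set.Ioo (0:ℝ) T, ∀ x,
    HasDerivAt (fun s => u s x)
      (deriv (deriv (u t)) x + u t x * deriv (u t) x + f t x) t) ∧
  IntervalIntegrable (fun t => H2sq (u t)) MeasureTheory.volume 0 T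

section BurgersAux

lemma contdiff2_facts {v : ℝ → ℝ} (hv : ContDiff ℝ 2 v) :
    Differentiable ℝ v ∧ Differentiable ℝ (deriv v) ∧ Continuous (deriv (deriv v)) := by
  have h2 : ContDiff ℝ ((1:ℕ∞)+1) v := by exact_mod_cast hv
  rw [contDiff_succ_iff_deriv] at h2
  have hc1 : ContDiff ℝ ((0:ℕ∞)+1) (deriv v) := by exact_mod_cast h2.2.2
  rw [contDiff_succ_iff_deriv] at hc1
  exact ⟨h2.1, hc1.1, hc1.2.2.continuous⟩

lemma periodic_deriv_aux {v : ℝ → ℝ} {c : ℝ} (h : Function.Periodic v c) :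
    Function.Periodic (deriv v) c := by
  intro x
  have h1 : (fun y => v (y + c)) = v := funext h
  calc deriv v (x + c) = deriv (fun y => v (y + c)) x := (deriv_comp_add_const v c x).symm
  _ = deriv v x := by rw [h1]

lemma H2sq_nonneg (v : ℝ → ℝ) : 0 ≤ H2sq v :=
  intervalIntegral.integral_nonneg Real.two_pi_pos.le (fun x _ => by positivity)

lemma sobolev_bound {v : ℝ → ℝ} (hv : ContDiff ℝ 2 v)
    (hp : Function.Periodic v (2*π)) :
    ∀ x ∈ Icc (0:ℝ) (2*π), (deriv v x)^2 ≤ H2sq v := by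
  obtain ⟨hd, hd1, hc2⟩ := contdiff2_facts hv
  have hcd : Continuous (deriv v) := hd1.continuous
  -- the derivative has integral zero over a period
  have hmean : ∫ x in (0:ℝ)..(2*π), deriv v x = 0 := by
    rw [intervalIntegral.integral_deriv_eq_sub (fun x _ => hd x)
      (hcd.intervalIntegrable _ _)]
    have : v (2*π) = v 0 := by simpa using hp 0
    simp [this]
  -- hence the derivative vanishes somewhere on [0, 2π]
  have hzero : ∃ x₀ ∈ Icc (0:ℝ) (2*π), deriv v x₀ = 0 := by
    by_contra hcon
    push_neg at hcon
    have h0 : deriv v 0 ≠ 0 := hcon 0 ⟨le_refl _, Real.two_pi_pos.le⟩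
    have hsign : (∀ x ∈ Icc (0:ℝ) (2*π), 0 < deriv v x) ∨
        (∀ x ∈ Icc (0:ℝ) (2*π), deriv v x < 0) := by
      rcases h0.lt_or_gt with h | h
      · right
        intro x hx
        rcases (hcon x hx).lt_or_gt with h' | h'
        · exact h'
        · exfalso
          have : (0:ℝ) ∈ uIcc (deriv v 0) (deriv v x) := by
            rw [Set.mem_uIcc]; left; exact ⟨h.le, h'.le⟩
          obtain ⟨y, hy, hy0⟩ := intermediate_value_uIcc (hcd.continuousOn) this
          have hy' : y ∈ Icc (0:ℝ) (2*π) := by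
            rcases Set.mem_uIcc.mp hy with h'' | h''
            · exact ⟨h''.1, le_trans h''.2 hx.2⟩
            · exact ⟨le_trans hx.1 h''.1, le_trans h''.2 Real.two_pi_pos.le⟩
          exact hcon y hy' hy0
      · left
        intro x hx
        rcases (hcon x hx).lt_or_gt with h' | h'
        · exfalso
          have : (0:ℝ) ∈ uIcc (deriv v 0) (deriv v x) := by
            rw [Set.mem_uIcc]; right; exact ⟨h'.le, h.le⟩
          obtain ⟨y, hy, hy0⟩ := intermediate_value_uIcc (hcd.continuousOn) this
          have hy' : y ∈ Icc (0:ℝ) (2*π) := by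
            rcases Set.mem_uIcc.mp hy with h'' | h''
            · exact ⟨h''.1, le_trans h''.2 hx.2⟩
            · exact ⟨le_trans hx.1 h''.1, le_trans h''.2 Real.two_pi_pos.le⟩
          exact hcon y hy' hy0
        · exact h'
    rcases hsign with h | h
    · have : 0 < ∫ x in (0:ℝ)..(2*π), deriv v x :=
        intervalIntegral.intervalIntegral_pos_of_pos_on (hcd.intervalIntegrable _ _)
          (fun x hx => h x ⟨hx.1.le, hx.2.le⟩) Real.two_pi_pos
      linarith [this, hmean.le]
    · have : 0 < ∫ x in (0:ℝ)..(2*π), -deriv v x :=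
        intervalIntegral.intervalIntegral_pos_of_pos_on
          ((hcd.neg).intervalIntegrable _ _)
          (fun x hx => neg_pos.mpr (h x ⟨hx.1.le, hx.2.le⟩)) Real.two_pi_pos
      rw [intervalIntegral.integral_neg, hmean] at this
      linarith
  obtain ⟨x₀, hx₀, hx₀0⟩ := hzero
  intro x hx
  -- FTC for (deriv v)^2
  have hftc : (∫ y in x₀..x, 2 * deriv v y * deriv (deriv v) y)
      = (deriv v x)^2 - (deriv v x₀)^2 := by
    exact intervalIntegral.integral_eq_sub_of_hasDerivAt
      (f := fun y => (deriv v y)^2)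
      (fun y _ => by simpa using ((hd1 y).hasDerivAt.fun_pow 2))
      (((continuous_const.mul hcd).mul hc2).intervalIntegrable _ _)
  have h1 : (deriv v x)^2 = ∫ y in x₀..x, 2 * deriv v y * deriv (deriv v) y := by
    rw [hftc, hx₀0]; ring
  have h2 : (deriv v x)^2 ≤ ∫ y in (0:ℝ)..(2*π), |2 * deriv v y * deriv (deriv v) y| := by
    rw [h1]
    calc (∫ y in x₀..x, 2 * deriv v y * deriv (deriv v) y)
        ≤ |∫ y in x₀..x, abs (2 * deriv v y * deriv (deriv v) y)| := by
          have := intervalIntegral.norm_integral_le_abs_integral_norm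
            (f := fun y => 2 * deriv v y * deriv (deriv v) y) (a := x₀) (b := x) (μ := volume)
          simp only [Real.norm_eq_abs] at this
          exact le_trans (le_abs_self _) this
      _ ≤ |∫ y in (0:ℝ)..(2*π), abs (2 * deriv v y * deriv (deriv v) y)| := by
          apply intervalIntegral.abs_integral_mono_interval
          · rw [Set.uIoc_of_le Real.two_pi_pos.le]
            intro y hy
            rcases Set.mem_uIoc.mp hy with h' | h'
            · exact ⟨lt_of_le_of_lt hx₀.1 h'.1, le_trans h'.2 hx.2⟩
            · exact ⟨lt_of_le_of_lt hx.1 h'.1, le_trans h'.2 hx₀.2⟩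
          · exact Filter.Eventually.of_forall (fun y => abs_nonneg _)
          · exact (((continuous_const.mul hcd).mul hc2).abs).intervalIntegrable _ _
      _ = ∫ y in (0:ℝ)..(2*π), |2 * deriv v y * deriv (deriv v) y| :=
          abs_of_nonneg (intervalIntegral.integral_nonneg Real.two_pi_pos.le
            (fun y _ => abs_nonneg _))
  have h3 : (∫ y in (0:ℝ)..(2*π), |2 * deriv v y * deriv (deriv v) y|)
      ≤ ∫ y in (0:ℝ)..(2*π), (v y)^2 + (deriv v y)^2 + (deriv (deriv v) y)^2 := by
    apply intervalIntegral.integral_mono_on Real.two_pi_pos.le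
    · exact (((continuous_const.mul hcd).mul hc2).abs).intervalIntegrable _ _
    · exact (((hv.continuous.pow 2).add (hcd.pow 2)).add (hc2.pow 2)).intervalIntegrable _ _
    · intro y _
      have := sq_nonneg (deriv v y - deriv (deriv v) y)
      have := sq_nonneg (deriv v y + deriv (deriv v) y)
      have := sq_nonneg (v y)
      rw [abs_le]
      constructor <;> nlinarith
  have hH : H2sq v = ∫ y in (0:ℝ)..(2*π), (v y)^2 + (deriv v y)^2 + (deriv (deriv v) y)^2 := rfl
  rw [hH]
  exact le_trans h2 h3

lemma zero_of_integral_sq {v : ℝ → ℝ} (hv : Continuous v)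
    (h : (∫ x in (0:ℝ)..(2*π), (v x)^2) = 0) : ∀ x ∈ Icc (0:ℝ) (2*π), v x = 0 := by
  have hIoo : ∀ x ∈ Ioo (0:ℝ) (2*π), v x = 0 := by
    intro x hx
    by_contra hne
    have hset : (fun x => (v x)^2) =ᵐ[volume.restrict (Ioc 0 (2*π))] 0 := by
      rw [← MeasureTheory.integral_eq_zero_iff_of_nonneg (fun y => sq_nonneg (v y))
        ((hv.pow 2).integrableOn_Ioc)]
      rw [intervalIntegral.integral_of_le Real.two_pi_pos.le] at h
      exact h
    have hmeas0 : volume ({y | (v y)^2 ≠ 0} ∩ Ioc 0 (2*π)) = 0 := by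
      have := MeasureTheory.ae_iff.mp hset
      rwa [MeasureTheory.Measure.restrict_apply (by
        have : IsOpen {y | (v y)^2 ≠ 0} := isOpen_ne.preimage (hv.pow 2)
        exact this.measurableSet)] at this
    have hU : IsOpen ({y | (v y)^2 ≠ 0} ∩ Ioo 0 (2*π)) :=
      (isOpen_ne.preimage (hv.pow 2)).inter isOpen_Ioo
    have hne' : ({y | (v y)^2 ≠ 0} ∩ Ioo 0 (2*π)).Nonempty :=
      ⟨x, pow_ne_zero 2 hne, hx⟩
    have hpos := hU.measure_pos volume hne'
    have : volume ({y | (v y)^2 ≠ 0} ∩ Ioo 0 (2*π)) = 0 :=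
      le_antisymm (le_trans (measure_mono (by
        intro y hy; exact ⟨hy.1, Ioo_subset_Ioc_self hy.2⟩)) hmeas0.le) zero_le
    exact absurd this hpos.ne'
  have heq : Set.EqOn v 0 (Ioo 0 (2*π)) := fun x hx => hIoo x hx
  have := heq.closure hv continuous_const
  rw [closure_Ioo Real.two_pi_pos.ne] at this
  intro x hx
  exact this hx

lemma gronwall_aux (T : ℝ) (E g : ℝ → ℝ)
    (hE : Continuous E) (hEnn : ∀ t, 0 ≤ E t) (hgnn : ∀ t, 0 ≤ g t)
    (hg : IntervalIntegrable g volume 0 T)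
    (hineq : ∀ t ∈ Icc 0 T, E t ≤ ∫ s in (0:ℝ)..t, g s * E s) :
    ∀ t ∈ Icc 0 T, E t = 0 := by
  rcases le_or_gt T 0 with hT | hT
  · intro t ht
    have h0 : t = 0 := le_antisymm (le_trans ht.2 hT) ht.1
    subst h0
    have := hineq 0 ⟨le_refl _, by linarith [ht.1, ht.2]⟩
    simp only [intervalIntegral.integral_same] at this
    exact le_antisymm this (hEnn 0)
  set S : Set ℝ := {t | ∀ r ∈ Icc 0 t, E r = 0} with hS
  have hgE : IntervalIntegrable (fun s => g s * E s) volume 0 T :=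
    hg.mul_continuousOn hE.continuousOn
  have h0 : (0:ℝ) ∈ S := by
    intro r hr
    have : r = 0 := le_antisymm hr.2 hr.1
    subst this
    have := hineq 0 ⟨le_refl _, hT.le⟩
    simp only [intervalIntegral.integral_same] at this
    exact le_antisymm this (hEnn 0)
  have hclosed : IsClosed (S ∩ Icc 0 T) := by
    apply IsSeqClosed.isClosed
    intro tn t htn hlim
    refine ⟨?_, isClosed_Icc.mem_of_tendsto hlim (Filter.Eventually.of_forall fun n => (htn n).2)⟩
    intro r hr
    rcases lt_or_eq_of_le hr.2 with hlt | heq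
    · obtain ⟨n, hn⟩ : ∃ n, r < tn n := by
        by_contra hcon
        push_neg at hcon
        exact absurd (le_of_tendsto hlim (Filter.Eventually.of_forall hcon)) (not_le.mpr hlt)
      exact (htn n).1 r ⟨hr.1, hn.le⟩
    · subst heq
      have hzn : ∀ n, E (tn n) = 0 := fun n => (htn n).1 (tn n) ⟨(htn n).2.1, le_refl _⟩
      have hcomp : Filter.Tendsto (fun n => E (tn n)) Filter.atTop (nhds (E r)) :=
        (hE.tendsto r).comp hlim
      simp only [hzn] at hcomp
      exact tendsto_nhds_unique hcomp tendsto_const_nhds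
  have hmain : Icc 0 T ⊆ S := by
    apply hclosed.Icc_subset_of_forall_exists_gt h0
    rintro x ⟨hxS, hx0, hxT⟩ y hy
    -- find δ > 0 such that ∫ g over [x, r] ≤ 1/2 for r ∈ [x, x+δ]
    have hgx : IntervalIntegrable g volume x T := hg.mono_set (by
      rw [Set.uIcc_of_le hxT.le, Set.uIcc_of_le (le_trans hx0 hxT.le)]
      exact Icc_subset_Icc hx0 le_rfl)
    have hGcont : ContinuousOn (fun r => ∫ s in x..r, g s) (Icc x T) := by
      have := intervalIntegral.continuousOn_primitive_interval
        (f := g) (μ := volume) (a := x) (b := T) (by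
          rw [← intervalIntegrable_iff']; exact hgx)
      rwa [Set.uIcc_of_le hxT.le] at this
    have hG0 : (∫ s in x..x, g s) = 0 := intervalIntegral.integral_same
    have hcw : ContinuousWithinAt (fun r => ∫ s in x..r, g s) (Icc x T) x :=
      hGcont x ⟨le_refl _, hxT.le⟩
    have h' : Filter.Tendsto (fun r => ∫ s in x..r, g s) (nhdsWithin x (Icc x T)) (nhds 0) := by
      have : (∫ s in x..x, g s) = 0 := intervalIntegral.integral_same
      simpa [ContinuousWithinAt, this] using hcw
    have hev : ∀ᶠ r in nhdsWithin x (Icc x T), (∫ s in x..r, g s) < 1/2 :=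
      h'.eventually_lt_const (by norm_num)
    obtain ⟨δ, hδ, hball⟩ := Metric.mem_nhdsWithin_iff.mp hev
    set z := min (x + δ/2) (min y T) with hz
    have hxz : x < z := by
      apply lt_min (by linarith) (lt_min hy hxT)
    have hzT : z ≤ T := le_trans (min_le_right _ _) (min_le_right _ _)
    have hzy : z ≤ y := le_trans (min_le_right _ _) (min_le_left _ _)
    have hzb : z - x ≤ δ/2 := by
      have := min_le_left (x + δ/2) (min y T)
      linarith
    -- the integral of g over [x, r] is < 1/2 for all r in [x, z]
    have hsmall : ∀ r ∈ Icc x z, (∫ s in x..r, g s) < 1/2 := by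
      intro r hr
      apply hball
      constructor
      · rw [Metric.mem_ball, Real.dist_eq, abs_of_nonneg (by linarith [hr.1])]
        have h2 : r ≤ z := hr.2
        linarith [hr.1]
      · exact ⟨hr.1, le_trans hr.2 hzT⟩
    -- maximum of E on [x, z]
    obtain ⟨rs, hrs, hmax⟩ := isCompact_Icc.exists_isMaxOn (Set.nonempty_Icc.mpr hxz.le)
      (hE.continuousOn (s := Icc x z))
    have hMnn : 0 ≤ E rs := hEnn rs
    have hgEx : IntervalIntegrable (fun s => g s * E s) volume 0 x := hgE.mono_set (by
      rw [Set.uIcc_of_le hx0, Set.uIcc_of_le (le_trans hx0 hxT.le)]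
      exact Icc_subset_Icc le_rfl hxT.le)
    have hgExr : IntervalIntegrable (fun s => g s * E s) volume x rs := hgE.mono_set (by
      rw [Set.uIcc_of_le hrs.1, Set.uIcc_of_le (le_trans hx0 hxT.le)]
      exact Icc_subset_Icc hx0 (le_trans hrs.2 hzT))
    have hgxr : IntervalIntegrable g volume x rs := hg.mono_set (by
      rw [Set.uIcc_of_le hrs.1, Set.uIcc_of_le (le_trans hx0 hxT.le)]
      exact Icc_subset_Icc hx0 (le_trans hrs.2 hzT))
    have hEz : ∀ r ∈ Icc x z, E r = 0 := by
      have hMle : E rs ≤ (1/2) * E rs := by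
        calc E rs ≤ ∫ s in (0:ℝ)..rs, g s * E s :=
              hineq rs ⟨le_trans hx0 hrs.1, le_trans hrs.2 hzT⟩
          _ = (∫ s in (0:ℝ)..x, g s * E s) + ∫ s in x..rs, g s * E s :=
              (intervalIntegral.integral_add_adjacent_intervals hgEx hgExr).symm
          _ = ∫ s in x..rs, g s * E s := by
              have hz0 : (∫ s in (0:ℝ)..x, g s * E s) = 0 := by
                rw [intervalIntegral.integral_congr (g := fun _ => (0:ℝ)) (by
                  intro s hs
                  rw [Set.uIcc_of_le hx0] at hs
                  simp [hxS s hs])]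
                simp
              rw [hz0, zero_add]
          _ ≤ ∫ s in x..rs, g s * E rs := by
              apply intervalIntegral.integral_mono_on hrs.1 hgExr (hgxr.mul_const _)
              intro s hs
              exact mul_le_mul_of_nonneg_left
                (hmax ⟨hs.1, le_trans hs.2 hrs.2⟩) (hgnn s)
          _ = (∫ s in x..rs, g s) * E rs := intervalIntegral.integral_mul_const _ _
          _ ≤ (1/2) * E rs :=
              mul_le_mul_of_nonneg_right (hsmall rs hrs).le hMnn
      have hM0 : E rs = 0 := le_antisymm (by linarith) hMnn
      intro r hr
      exact le_antisymm (le_trans (hmax hr) hM0.le) (hEnn r)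
    refine ⟨z, ?_, hxz, hzy⟩
    intro r hr
    rcases le_or_gt r x with h' | h'
    · exact hxS r ⟨hr.1, h'⟩
    · exact hEz r ⟨h'.le, hr.2⟩
  intro t ht
  exact hmain ht t ⟨ht.1, le_refl t⟩

lemma pt_bound (w v₁ v₂ d₁ d₂ e₁ e₂ W B : ℝ) (hw : |w| ≤ W) (h₁ : |v₁| ≤ B) (h₂ : |v₂| ≤ B) :
    |2*w*((e₁ + v₁*d₁) - (e₂ + v₂*d₂))|
      ≤ 4*(W+1)*(B+1)*(1 + d₁^2 + d₂^2 + e₁^2 + e₂^2) := by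
  have hW : 0 ≤ W := le_trans (abs_nonneg _) hw
  have hB : 0 ≤ B := le_trans (abs_nonneg _) h₁
  have key : |2*w*((e₁ + v₁*d₁) - (e₂ + v₂*d₂))|
      ≤ 2*W*(|e₁| + |e₂| + B*|d₁| + B*|d₂|) := by
    rw [abs_mul, abs_mul]
    have h3 : |(e₁ + v₁*d₁) - (e₂ + v₂*d₂)| ≤ |e₁| + |e₂| + B*|d₁| + B*|d₂| := by
      calc |(e₁ + v₁*d₁) - (e₂ + v₂*d₂)| ≤ |e₁ + v₁*d₁| + |e₂ + v₂*d₂| := abs_sub _ _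
        _ ≤ (|e₁| + |v₁| * |d₁|) + (|e₂| + |v₂| * |d₂|) := by
            gcongr <;> [exact le_trans (abs_add_le _ _) (by rw [abs_mul]);
              exact le_trans (abs_add_le _ _) (by rw [abs_mul])]
        _ ≤ |e₁| + |e₂| + B*|d₁| + B*|d₂| := by
            have := mul_le_mul_of_nonneg_right h₁ (abs_nonneg d₁)
            have := mul_le_mul_of_nonneg_right h₂ (abs_nonneg d₂)
            linarith
    calc |2| * |w| * |(e₁ + v₁*d₁) - (e₂ + v₂*d₂)|
        ≤ |2| * W * (|e₁| + |e₂| + B*|d₁| + B*|d₂|) := by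
          apply mul_le_mul (by gcongr) h3 (abs_nonneg _) (by positivity)
      _ = 2*W*(|e₁| + |e₂| + B*|d₁| + B*|d₂|) := by norm_num
  refine le_trans key ?_
  have q1 : 2*|e₁| ≤ 1 + e₁^2 := by nlinarith [sq_nonneg (|e₁| - 1), sq_abs e₁]
  have q2 : 2*|e₂| ≤ 1 + e₂^2 := by nlinarith [sq_nonneg (|e₂| - 1), sq_abs e₂]
  have q3 : 2*|d₁| ≤ 1 + d₁^2 := by nlinarith [sq_nonneg (|d₁| - 1), sq_abs d₁]
  have q4 : 2*|d₂| ≤ 1 + d₂^2 := by nlinarith [sq_nonneg (|d₂| - 1), sq_abs d₂]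
  nlinarith [mul_nonneg hW (abs_nonneg e₁), mul_nonneg hW (abs_nonneg e₂),
    mul_nonneg (mul_nonneg hW hB) (abs_nonneg d₁), mul_nonneg (mul_nonneg hW hB) (abs_nonneg d₂),
    mul_le_mul_of_nonneg_left q1 hW, mul_le_mul_of_nonneg_left q2 hW,
    mul_le_mul_of_nonneg_left q3 (mul_nonneg hW hB),
    mul_le_mul_of_nonneg_left q4 (mul_nonneg hW hB),
    sq_nonneg d₁, sq_nonneg d₂, sq_nonneg e₁, sq_nonneg e₂, mul_nonneg hW hB]

lemma energy_rate_bound {v₁ v₂ : ℝ → ℝ} (h1 : ContDiff ℝ 2 v₁) (h2 : ContDiff ℝ 2 v₂)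
    (hp1 : Function.Periodic v₁ (2*π)) (hp2 : Function.Periodic v₂ (2*π)) :
    (∫ x in (0:ℝ)..(2*π), 2*(v₁ x - v₂ x)*((deriv (deriv v₁) x + v₁ x * deriv v₁ x)
        - (deriv (deriv v₂) x + v₂ x * deriv v₂ x)))
      ≤ (Real.sqrt (H2sq v₁) + 2 * Real.sqrt (H2sq v₂))
          * ∫ x in (0:ℝ)..(2*π), (v₁ x - v₂ x)^2 := by
  obtain ⟨hd1, hd1', hc1''⟩ := contdiff2_facts h1
  obtain ⟨hd2, hd2', hc2''⟩ := contdiff2_facts h2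
  have hcv1 : Continuous v₁ := hd1.continuous
  have hcv2 : Continuous v₂ := hd2.continuous
  have hcd1 : Continuous (deriv v₁) := hd1'.continuous
  have hcd2 : Continuous (deriv v₂) := hd2'.continuous
  have hcw : Continuous (fun x => v₁ x - v₂ x) := hcv1.sub hcv2
  -- boundary values
  have hb1 : v₁ (2*π) = v₁ 0 := by simpa using hp1 0
  have hb2 : v₂ (2*π) = v₂ 0 := by simpa using hp2 0
  have hbd1 : deriv v₁ (2*π) = deriv v₁ 0 := by simpa using periodic_deriv_aux hp1 0
  have hbd2 : deriv v₂ (2*π) = deriv v₂ 0 := by simpa using periodic_deriv_aux hp2 0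
  -- first integration by parts : ∫ 2w (dd₁ - dd₂) = -∫ 2 (d₁-d₂)^2
  have ibp1 : (∫ x in (0:ℝ)..(2*π), (2*(v₁ x - v₂ x)) * (deriv (deriv v₁) x - deriv (deriv v₂) x))
      = - ∫ x in (0:ℝ)..(2*π), (2*(deriv v₁ x - deriv v₂ x)) * (deriv v₁ x - deriv v₂ x) := by
    have := intervalIntegral.integral_mul_deriv_eq_deriv_mul_of_hasDerivAt
      (a := (0:ℝ)) (b := 2*π)
      (u := fun x => 2*(v₁ x - v₂ x)) (u' := fun x => 2*(deriv v₁ x - deriv v₂ x))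
      (v := fun x => deriv v₁ x - deriv v₂ x)
      (v' := fun x => deriv (deriv v₁) x - deriv (deriv v₂) x)
      ((continuous_const.mul hcw).continuousOn)
      ((hcd1.sub hcd2).continuousOn)
      (fun x _ => by
        simpa using (((hd1 x).hasDerivAt.sub (hd2 x).hasDerivAt).const_mul (2:ℝ)))
      (fun x _ => ((hd1' x).hasDerivAt.sub (hd2' x).hasDerivAt))
      ((continuous_const.mul (hcd1.sub hcd2)).intervalIntegrable _ _)
      ((hc1''.sub hc2'').intervalIntegrable _ _)
    beta_reduce at this
    rw [this, hb1, hb2, hbd1, hbd2]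
    ring
  -- second integration by parts : ∫ v₁ * ((w^2)') = -∫ d₁ w^2
  have ibp2 : (∫ x in (0:ℝ)..(2*π), v₁ x * (2*(v₁ x - v₂ x)*(deriv v₁ x - deriv v₂ x)))
      = - ∫ x in (0:ℝ)..(2*π), deriv v₁ x * (v₁ x - v₂ x)^2 := by
    have := intervalIntegral.integral_mul_deriv_eq_deriv_mul_of_hasDerivAt
      (a := (0:ℝ)) (b := 2*π)
      (u := v₁) (u' := deriv v₁)
      (v := fun x => (v₁ x - v₂ x)^2)
      (v' := fun x => 2*(v₁ x - v₂ x)*(deriv v₁ x - deriv v₂ x))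
      (hcv1.continuousOn) ((hcw.pow 2).continuousOn)
      (fun x _ => (hd1 x).hasDerivAt)
      (fun x _ => by
        have := (((hd1 x).hasDerivAt.fun_sub (hd2 x).hasDerivAt)).fun_pow 2
        simpa using this)
      (hcd1.intervalIntegrable _ _)
      (((continuous_const.mul hcw).mul (hcd1.sub hcd2)).intervalIntegrable _ _)
    beta_reduce at this
    rw [this, hb1, hb2]
    ring
  -- decompose the integrand
  have hsplit : (∫ x in (0:ℝ)..(2*π), 2*(v₁ x - v₂ x)*((deriv (deriv v₁) x + v₁ x * deriv v₁ x)
        - (deriv (deriv v₂) x + v₂ x * deriv v₂ x)))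
      = (∫ x in (0:ℝ)..(2*π), (2*(v₁ x - v₂ x)) * (deriv (deriv v₁) x - deriv (deriv v₂) x))
        + ((∫ x in (0:ℝ)..(2*π), v₁ x * (2*(v₁ x - v₂ x)*(deriv v₁ x - deriv v₂ x)))
          + ∫ x in (0:ℝ)..(2*π), 2*(v₁ x - v₂ x)^2 * deriv v₂ x) := by
    rw [← intervalIntegral.integral_add
      (f := fun x => v₁ x * (2*(v₁ x - v₂ x)*(deriv v₁ x - deriv v₂ x)))
      (g := fun x => 2*(v₁ x - v₂ x)^2 * deriv v₂ x)
      ((hcv1.mul ((continuous_const.mul hcw).mul (hcd1.sub hcd2))).intervalIntegrable _ _)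
      (((continuous_const.mul (hcw.pow 2)).mul hcd2).intervalIntegrable _ _)]
    rw [← intervalIntegral.integral_add
      (f := fun x => (2*(v₁ x - v₂ x)) * (deriv (deriv v₁) x - deriv (deriv v₂) x))
      (g := fun x => v₁ x * (2*(v₁ x - v₂ x)*(deriv v₁ x - deriv v₂ x))
        + 2*(v₁ x - v₂ x)^2 * deriv v₂ x)
      (((continuous_const.mul hcw).mul (hc1''.sub hc2'')).intervalIntegrable _ _)
      ((hcv1.mul ((continuous_const.mul hcw).mul (hcd1.sub hcd2))).add
        ((continuous_const.mul (hcw.pow 2)).mul hcd2) |>.intervalIntegrable _ _)]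
    apply intervalIntegral.integral_congr
    intro x _
    ring
  rw [hsplit, ibp1, ibp2]
  have hA : - (∫ x in (0:ℝ)..(2*π), (2*(deriv v₁ x - deriv v₂ x)) * (deriv v₁ x - deriv v₂ x)) ≤ 0 := by
    rw [neg_nonpos]
    apply intervalIntegral.integral_nonneg Real.two_pi_pos.le
    intro x _
    nlinarith [sq_nonneg (deriv v₁ x - deriv v₂ x)]
  have hBC : (- ∫ x in (0:ℝ)..(2*π), deriv v₁ x * (v₁ x - v₂ x)^2)
        + (∫ x in (0:ℝ)..(2*π), 2*(v₁ x - v₂ x)^2 * deriv v₂ x)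
      ≤ (Real.sqrt (H2sq v₁) + 2 * Real.sqrt (H2sq v₂))
          * ∫ x in (0:ℝ)..(2*π), (v₁ x - v₂ x)^2 := by
    have hcomb : (- ∫ x in (0:ℝ)..(2*π), deriv v₁ x * (v₁ x - v₂ x)^2)
        + (∫ x in (0:ℝ)..(2*π), 2*(v₁ x - v₂ x)^2 * deriv v₂ x)
        = ∫ x in (0:ℝ)..(2*π), (2 * deriv v₂ x - deriv v₁ x) * (v₁ x - v₂ x)^2 := by
      rw [← intervalIntegral.integral_neg, ← intervalIntegral.integral_add
        (f := fun x => -(deriv v₁ x * (v₁ x - v₂ x)^2))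
        (g := fun x => 2*(v₁ x - v₂ x)^2 * deriv v₂ x)
        (((hcd1.mul (hcw.pow 2))).neg.intervalIntegrable _ _)
        (((continuous_const.mul (hcw.pow 2)).mul hcd2).intervalIntegrable _ _)]
      apply intervalIntegral.integral_congr
      intro x _
      ring
    rw [hcomb]
    have hmono : (∫ x in (0:ℝ)..(2*π), (2 * deriv v₂ x - deriv v₁ x) * (v₁ x - v₂ x)^2)
        ≤ ∫ x in (0:ℝ)..(2*π), (Real.sqrt (H2sq v₁) + 2 * Real.sqrt (H2sq v₂)) * (v₁ x - v₂ x)^2 := by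
      apply intervalIntegral.integral_mono_on Real.two_pi_pos.le
      · exact ((continuous_const.mul hcd2 |>.sub hcd1).mul (hcw.pow 2)).intervalIntegrable _ _
      · exact (continuous_const.mul (hcw.pow 2)).intervalIntegrable _ _
      · intro x hx
        have hs1 := sobolev_bound h1 hp1 x hx
        have hs2 := sobolev_bound h2 hp2 x hx
        have hk1 : |deriv v₁ x| ≤ Real.sqrt (H2sq v₁) := by
          rw [← Real.sqrt_sq_eq_abs]
          exact Real.sqrt_le_sqrt hs1
        have hk2 : |deriv v₂ x| ≤ Real.sqrt (H2sq v₂) := by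
          rw [← Real.sqrt_sq_eq_abs]
          exact Real.sqrt_le_sqrt hs2
        have hfac : 2 * deriv v₂ x - deriv v₁ x
            ≤ Real.sqrt (H2sq v₁) + 2 * Real.sqrt (H2sq v₂) := by
          have l1 := abs_le.mp hk1
          have l2 := abs_le.mp hk2
          linarith [l1.1, l2.2]
        exact mul_le_mul_of_nonneg_right hfac (sq_nonneg _)
    rw [intervalIntegral.integral_const_mul] at hmono
    exact hmono
  linarith

/-- a.e. point of `(volume.restrict s).prod volume` has first coordinate in `s`. -/
lemma ae_fst_mem {s : Set ℝ} (hs : MeasurableSet s) :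
    ∀ᵐ p : ℝ × ℝ ∂((volume.restrict s).prod volume), p.1 ∈ s := by
  rw [MeasureTheory.ae_iff]
  have hset : {p : ℝ × ℝ | ¬ p.1 ∈ s} = sᶜ ×ˢ (univ : Set ℝ) := by
    ext p; simp
  rw [hset, MeasureTheory.Measure.prod_prod, MeasureTheory.Measure.restrict_apply hs.compl]
  simp

/-- slope sequence converging to the derivative -/
lemma tendsto_slope_seq {v : ℝ → ℝ} {x : ℝ} (hd : DifferentiableAt ℝ v x) :
    Filter.Tendsto (fun n : ℕ => (v (x + 1/(n+1)) - v x) / (1/(n+1)))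
      Filter.atTop (nhds (deriv v x)) := by
  have hder := hasDerivAt_iff_tendsto_slope.mp hd.hasDerivAt
  have hxn : Filter.Tendsto (fun n : ℕ => x + 1/(n+1)) Filter.atTop (nhdsWithin x {x}ᶜ) := by
    apply tendsto_nhdsWithin_of_tendsto_nhds_of_eventually_within
    · have : Filter.Tendsto (fun n : ℕ => (1:ℝ)/(n+1)) Filter.atTop (nhds 0) :=
        tendsto_one_div_add_atTop_nhds_zero_nat
      simpa using (tendsto_const_nhds (x := x)).add this
    · apply Filter.Eventually.of_forall
      intro n
      have : (0:ℝ) < 1/(n+1) := by positivity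
      simp only [Set.mem_compl_iff, Set.mem_singleton_iff]
      intro h
      nlinarith [congrArg (fun y => y - x) h]
  have h2 := hder.comp hxn
  refine h2.congr (fun n => ?_)
  show slope v x (x + 1/(n+1)) = _
  rw [slope_def_field]
  congr 1
  ring

lemma aesm_deriv_param {T ε t : ℝ} (hε : 0 < ε) (htT : t ≤ T) (u : ℝ → ℝ → ℝ)
    (hc : Continuous (Function.uncurry u))
    (hreg : ∀ s ∈ Ioc (0:ℝ) T, ContDiff ℝ 2 (u s)) :
    AEStronglyMeasurable (fun p : ℝ × ℝ => deriv (u p.1) p.2)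
        ((volume.restrict (Ioc ε t)).prod volume) ∧
      AEStronglyMeasurable (fun p : ℝ × ℝ => deriv (deriv (u p.1)) p.2)
        ((volume.restrict (Ioc ε t)).prod volume) := by
  set ρ : Measure (ℝ × ℝ) := (volume.restrict (Ioc ε t)).prod volume with hρ
  have hae : ∀ᵐ p : ℝ × ℝ ∂ρ, p.1 ∈ Ioc ε t := ae_fst_mem measurableSet_Ioc
  have hsub : ∀ {s : ℝ}, s ∈ Ioc ε t → s ∈ Ioc (0:ℝ) T :=
    fun hs => ⟨lt_trans hε hs.1, le_trans hs.2 htT⟩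
  have h1 : AEStronglyMeasurable (fun p : ℝ × ℝ => deriv (u p.1) p.2) ρ := by
    apply aestronglyMeasurable_of_tendsto_ae (u := Filter.atTop)
      (f := fun (n : ℕ) (p : ℝ × ℝ) => (u p.1 (p.2 + 1/(n+1)) - u p.1 p.2) / (1/(n+1)))
    · intro n
      apply Continuous.aestronglyMeasurable
      apply Continuous.div_const
      exact (hc.comp (continuous_fst.prodMk (continuous_snd.add continuous_const))).sub
        (hc.comp (continuous_fst.prodMk continuous_snd))
    · filter_upwards [hae] with p hp
      exact tendsto_slope_seq ((contdiff2_facts (hreg p.1 (hsub hp))).1 p.2)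
  refine ⟨h1, ?_⟩
  apply aestronglyMeasurable_of_tendsto_ae (u := Filter.atTop)
    (f := fun (n : ℕ) (p : ℝ × ℝ) =>
      (deriv (u p.1) (p.2 + 1/(n+1)) - deriv (u p.1) p.2) / (1/(n+1)))
  · intro n
    have hshift : AEStronglyMeasurable (fun p : ℝ × ℝ => deriv (u p.1) (p.2 + 1/(n+1))) ρ := by
      have hmp : MeasurePreserving (fun p : ℝ × ℝ => (p.1, p.2 + 1/(n+1))) ρ ρ :=
        (MeasurePreserving.id _).prod (measurePreserving_add_right volume _)
      exact h1.comp_measurePreserving hmp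
    have hsub2 : AEStronglyMeasurable
        (fun p : ℝ × ℝ => deriv (u p.1) (p.2 + 1/(n+1)) - deriv (u p.1) p.2) ρ :=
      hshift.sub h1
    simpa [div_eq_mul_inv] using hsub2.mul_const ((1:ℝ)/(n+1))⁻¹
  · filter_upwards [hae] with p hp
    exact tendsto_slope_seq ((contdiff2_facts (hreg p.1 (hsub hp))).2.1 p.2)

end BurgersAux


/-- Uniqueness of weak solutions of the one-dimensional periodic Burgers equation
`∂_t u = ∂_x² u + u ∂_x u + f` in the class `L²([0,T], H²) ∩ H¹([0,T], L²)` with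
given initial data. -/
theorem stmt17 (T Cf : ℝ) (hT : 0 < T)
    (f : ℝ → ℝ → ℝ)
    (hf_bdd : ∀ t ∈ Set.Icc (0:ℝ) T, ∀ x, |f t x| ≤ Cf)
    (u₁ u₂ : ℝ → ℝ → ℝ)
    (h₁ : IsBurgersSol T f u₁) (h₂ : IsBurgersSol T f u₂)
    (hinit : ∀ x, u₁ 0 x = u₂ 0 x) :
    ∀ t ∈ Set.Icc (0:ℝ) T, ∀ x, u₁ t x = u₂ t x := by
  obtain ⟨hc₁, hper₁, hreg₁, hde₁, hint₁⟩ := h₁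
  obtain ⟨hc₂, hper₂, hreg₂, hde₂, hint₂⟩ := h₂
  -- energy and Gronwall coefficient
  set E : ℝ → ℝ := fun r => ∫ x in (0:ℝ)..(2*π), (u₁ r x - u₂ r x)^2 with hEdef
  set g : ℝ → ℝ := fun s => Real.sqrt (H2sq (u₁ s)) + 2 * Real.sqrt (H2sq (u₂ s)) with hgdef
  have hwc : Continuous (fun p : ℝ × ℝ => u₁ p.1 p.2 - u₂ p.1 p.2) := by
    exact hc₁.sub hc₂
  have hEcont : Continuous E := by
    apply intervalIntegral.continuous_parametric_intervalIntegral_of_continuous'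
      (f := fun r x => (u₁ r x - u₂ r x)^2) (μ := volume)
    exact hwc.pow 2
  have hE0 : E 0 = 0 := by
    simp only [hEdef]
    have : ∀ x, (u₁ 0 x - u₂ 0 x)^2 = 0 := fun x => by rw [hinit x]; ring
    simp [this]
  have hEnn : ∀ r, 0 ≤ E r := fun r =>
    intervalIntegral.integral_nonneg Real.two_pi_pos.le (fun x _ => sq_nonneg _)
  have hgnn : ∀ s, 0 ≤ g s := fun s => by
    simp only [hgdef]
    positivity
  -- integrability of g
  have hintg : IntervalIntegrable g volume 0 T := by
    rw [intervalIntegrable_iff, Set.uIoc_of_le hT.le]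
    rw [intervalIntegrable_iff, Set.uIoc_of_le hT.le] at hint₁ hint₂
    apply Integrable.mono'
      (g := fun s => (1 + H2sq (u₁ s)) + (1 + H2sq (u₂ s)) * 2)
    · exact ((integrable_const 1).add hint₁).add (((integrable_const 1).add hint₂).mul_const 2)
    · exact ((Real.continuous_sqrt.comp_aestronglyMeasurable hint₁.aestronglyMeasurable).add
        ((Real.continuous_sqrt.comp_aestronglyMeasurable hint₂.aestronglyMeasurable).const_mul 2))
    · apply Filter.Eventually.of_forall
      intro s
      have hs1 : Real.sqrt (H2sq (u₁ s)) ≤ 1 + H2sq (u₁ s) := by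
        nlinarith [Real.sq_sqrt (H2sq_nonneg (u₁ s)), Real.sqrt_nonneg (H2sq (u₁ s)),
          sq_nonneg (Real.sqrt (H2sq (u₁ s)) - 1)]
      have hs2 : Real.sqrt (H2sq (u₂ s)) ≤ 1 + H2sq (u₂ s) := by
        nlinarith [Real.sq_sqrt (H2sq_nonneg (u₂ s)), Real.sqrt_nonneg (H2sq (u₂ s)),
          sq_nonneg (Real.sqrt (H2sq (u₂ s)) - 1)]
      have : 0 ≤ g s := hgnn s
      rw [Real.norm_eq_abs, abs_of_nonneg this]
      simp only [hgdef]
      linarith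
  -- uniform bound on u₁, u₂
  obtain ⟨B, hB⟩ : ∃ B, ∀ r ∈ Icc (0:ℝ) T, ∀ x, |u₁ r x| ≤ B ∧ |u₂ r x| ≤ B := by
    obtain ⟨B₁, hB₁⟩ := (isCompact_Icc.prod isCompact_Icc).exists_bound_of_continuousOn
      (s := Icc (0:ℝ) T ×ˢ Icc (0:ℝ) (2*π)) hc₁.continuousOn
    obtain ⟨B₂, hB₂⟩ := (isCompact_Icc.prod isCompact_Icc).exists_bound_of_continuousOn
      (s := Icc (0:ℝ) T ×ˢ Icc (0:ℝ) (2*π)) hc₂.continuousOn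
    refine ⟨max B₁ B₂, fun r hr x => ?_⟩
    have hp1 : Function.Periodic (u₁ r) (2*π) := fun y => hper₁ r y
    have hp2 : Function.Periodic (u₂ r) (2*π) := fun y => hper₂ r y
    obtain ⟨y₁, hy₁, he₁⟩ := hp1.exists_mem_Ico₀ Real.two_pi_pos x
    obtain ⟨y₂, hy₂, he₂⟩ := hp2.exists_mem_Ico₀ Real.two_pi_pos x
    constructor
    · rw [he₁]
      calc |u₁ r y₁| ≤ B₁ := by
            have := hB₁ (r, y₁) (Set.mk_mem_prod hr ⟨hy₁.1, hy₁.2.le⟩)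
            simpa [Function.uncurry, Real.norm_eq_abs] using this
        _ ≤ max B₁ B₂ := le_max_left _ _
    · rw [he₂]
      calc |u₂ r y₂| ≤ B₂ := by
            have := hB₂ (r, y₂) (Set.mk_mem_prod hr ⟨hy₂.1, hy₂.2.le⟩)
            simpa [Function.uncurry, Real.norm_eq_abs] using this
        _ ≤ max B₁ B₂ := le_max_right _ _
  have hBnn : 0 ≤ B := le_trans (abs_nonneg _) (hB 0 ⟨le_refl _, hT.le⟩ 0).1
  -- energy differential inequality on (0, T]
  have hdiff : ∀ t ∈ Ioc (0:ℝ) T, ∀ ε ∈ Ioo (0:ℝ) t,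
      E t - E ε ≤ ∫ s in ε..t, g s * E s := by
    intro t ht ε hε
    have hεt : ε ≤ t := hε.2.le
    set μ : Measure ℝ := volume.restrict (Ioc ε t) with hμ
    set ν : Measure ℝ := volume.restrict (Ioc 0 (2*π)) with hν
    set F : ℝ × ℝ → ℝ := fun p => 2*(u₁ p.1 p.2 - u₂ p.1 p.2)
      *((deriv (deriv (u₁ p.1)) p.2 + u₁ p.1 p.2 * deriv (u₁ p.1) p.2)
        - (deriv (deriv (u₂ p.1)) p.2 + u₂ p.1 p.2 * deriv (u₂ p.1) p.2)) with hF
    -- measurability of the parametric derivatives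
    obtain ⟨hm11, hm12⟩ := aesm_deriv_param hε.1 ht.2 u₁ hc₁ hreg₁
    obtain ⟨hm21, hm22⟩ := aesm_deriv_param hε.1 ht.2 u₂ hc₂ hreg₂
    have hprodeq : μ.prod ν = ((volume.restrict (Ioc ε t)).prod volume).restrict
        ((univ : Set ℝ) ×ˢ Ioc 0 (2*π)) := by
      rw [← MeasureTheory.Measure.prod_restrict, MeasureTheory.Measure.restrict_univ]
    have hres : ∀ {φ : ℝ × ℝ → ℝ}, AEStronglyMeasurable φ ((volume.restrict (Ioc ε t)).prod volume)
        → AEStronglyMeasurable φ (μ.prod ν) := by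
      intro φ hφ
      rw [hprodeq]
      exact hφ.restrict
    have hm11' := hres hm11
    have hm12' := hres hm12
    have hm21' := hres hm21
    have hm22' := hres hm22
    have hwm : AEStronglyMeasurable (fun p : ℝ × ℝ => u₁ p.1 p.2) (μ.prod ν) :=
      (hc₁.comp continuous_id).aestronglyMeasurable
    have hwm2 : AEStronglyMeasurable (fun p : ℝ × ℝ => u₂ p.1 p.2) (μ.prod ν) :=
      (hc₂.comp continuous_id).aestronglyMeasurable
    have hFaesm : AEStronglyMeasurable F (μ.prod ν) := by
      apply AEStronglyMeasurable.mul
      · exact (aestronglyMeasurable_const.mul (hwm.sub hwm2))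
      · exact ((hm12'.add (hwm.mul hm11')).sub (hm22'.add (hwm2.mul hm21')))
    -- the dominating function
    set C0 : ℝ := 4*(2*B+1)*(B+1) with hC0
    set Gb : ℝ × ℝ → ℝ := fun p => C0 * (1 + (deriv (u₁ p.1) p.2)^2 + (deriv (u₂ p.1) p.2)^2
      + (deriv (deriv (u₁ p.1)) p.2)^2 + (deriv (deriv (u₂ p.1)) p.2)^2) with hGb
    have hsqm : ∀ {φ : ℝ × ℝ → ℝ}, AEStronglyMeasurable φ (μ.prod ν) →
        AEStronglyMeasurable (fun p => (φ p)^2) (μ.prod ν) := fun hφ =>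
      (continuous_pow 2).comp_aestronglyMeasurable hφ
    have hGaesm : AEStronglyMeasurable Gb (μ.prod ν) := by
      apply aestronglyMeasurable_const.mul
      exact (((aestronglyMeasurable_const.add (hsqm hm11')).add
        (hsqm hm21')).add (hsqm hm12')).add (hsqm hm22')
    have haeprod : ∀ᵐ p : ℝ × ℝ ∂(μ.prod ν), p ∈ Ioc ε t ×ˢ Ioc 0 (2*π) := by
      rw [hμ, hν, MeasureTheory.Measure.prod_restrict]
      exact ae_restrict_mem (measurableSet_Ioc.prod measurableSet_Ioc)
    have hsmem : ∀ {s : ℝ}, s ∈ Ioc ε t → s ∈ Ioc (0:ℝ) T :=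
      fun hs => ⟨lt_trans hε.1 hs.1, le_trans hs.2 ht.2⟩
    -- integrability of the dominating function
    have hGint : Integrable Gb (μ.prod ν) := by
      rw [MeasureTheory.integrable_prod_iff hGaesm]
      constructor
      · have haes : ∀ᵐ s ∂μ, s ∈ Ioc ε t := ae_restrict_mem measurableSet_Ioc
        filter_upwards [haes] with s hs
        obtain ⟨hd1, hd1', hc1''⟩ := contdiff2_facts (hreg₁ s (hsmem hs))
        obtain ⟨hd2, hd2', hc2''⟩ := contdiff2_facts (hreg₂ s (hsmem hs))
        apply Continuous.integrableOn_Ioc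
        exact continuous_const.mul (((((continuous_const.add
          ((hd1'.continuous).pow 2)).add ((hd2'.continuous).pow 2)).add
          (hc1''.pow 2)).add (hc2''.pow 2)))
      · apply Integrable.mono' (g := fun s => C0 * (2*π + (H2sq (u₁ s) + H2sq (u₂ s))))
        · rw [intervalIntegrable_iff, Set.uIoc_of_le hT.le] at hint₁ hint₂
          apply Integrable.const_mul
          apply Integrable.add (integrable_const _)
          have h12 : IntegrableOn (fun s => H2sq (u₁ s) + H2sq (u₂ s)) (Ioc 0 T) volume := by
            exact hint₁.add hint₂
          exact h12.mono_set (Ioc_subset_Ioc hε.1.le ht.2)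
        · exact hGaesm.norm.integral_prod_right'
        · have haes : ∀ᵐ s ∂μ, s ∈ Ioc ε t := ae_restrict_mem measurableSet_Ioc
          filter_upwards [haes] with s hs
          obtain ⟨hd1, hd1', hc1''⟩ := contdiff2_facts (hreg₁ s (hsmem hs))
          obtain ⟨hd2, hd2', hc2''⟩ := contdiff2_facts (hreg₂ s (hsmem hs))
          have hnn : 0 ≤ ∫ x, ‖Gb (s, x)‖ ∂ν :=
            MeasureTheory.integral_nonneg (fun x => norm_nonneg _)
          rw [Real.norm_eq_abs, abs_of_nonneg hnn]
          have hGbnn : ∀ x, ‖Gb (s, x)‖ = Gb (s, x) := by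
            intro x
            rw [Real.norm_eq_abs, abs_of_nonneg]
            simp only [hGb, hC0]
            positivity
          rw [show (fun x => ‖Gb (s, x)‖) = fun x => Gb (s, x) from funext hGbnn]
          -- compute and bound the inner integral
          have hq : Integrable (fun x => (deriv (u₁ s) x)^2 + (deriv (u₂ s) x)^2
              + (deriv (deriv (u₁ s)) x)^2 + (deriv (deriv (u₂ s)) x)^2) ν := by
            apply Continuous.integrableOn_Ioc
            exact (((hd1'.continuous.pow 2).add (hd2'.continuous.pow 2)).add
              (hc1''.pow 2)).add (hc2''.pow 2)
          have hGbs : (fun x => Gb (s, x)) = fun x => C0 * (1 + ((deriv (u₁ s) x)^2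
              + (deriv (u₂ s) x)^2 + (deriv (deriv (u₁ s)) x)^2
              + (deriv (deriv (u₂ s)) x)^2)) := by
            funext x
            simp only [hGb]
            ring
          rw [hGbs, MeasureTheory.integral_const_mul]
          apply mul_le_mul_of_nonneg_left _ (by simp only [hC0]; positivity)
          rw [MeasureTheory.integral_add (integrable_const 1) hq]
          have hc1 : (∫ _ : ℝ, (1:ℝ) ∂ν) = 2*π := by
            simp [hν, Real.volume_Ioc, ENNReal.toReal_ofReal Real.two_pi_pos.le, Real.pi_pos.le]
          rw [hc1]
          apply add_le_add le_rfl
          -- the quadratic part is bounded by the H² norms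
          have hH1 : H2sq (u₁ s) = ∫ x, ((u₁ s x)^2 + (deriv (u₁ s) x)^2
              + (deriv (deriv (u₁ s)) x)^2) ∂ν := by
            rw [H2sq, intervalIntegral.integral_of_le Real.two_pi_pos.le]
          have hH2 : H2sq (u₂ s) = ∫ x, ((u₂ s x)^2 + (deriv (u₂ s) x)^2
              + (deriv (deriv (u₂ s)) x)^2) ∂ν := by
            rw [H2sq, intervalIntegral.integral_of_le Real.two_pi_pos.le]
          rw [hH1, hH2, ← MeasureTheory.integral_add]
          · apply MeasureTheory.integral_mono hq
            · apply Continuous.integrableOn_Ioc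
              exact ((((hd1.continuous.pow 2).add (hd1'.continuous.pow 2)).add
                (hc1''.pow 2)).add ((((hd2.continuous.pow 2).add
                (hd2'.continuous.pow 2)).add (hc2''.pow 2))))
            · intro x
              have := sq_nonneg (u₁ s x)
              have := sq_nonneg (u₂ s x)
              simp only [Pi.add_apply]
              linarith
          · apply Continuous.integrableOn_Ioc
            exact ((hd1.continuous.pow 2).add (hd1'.continuous.pow 2)).add (hc1''.pow 2)
          · apply Continuous.integrableOn_Ioc
            exact ((hd2.continuous.pow 2).add (hd2'.continuous.pow 2)).add (hc2''.pow 2)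
    -- integrability of F
    have hFint : Integrable F (μ.prod ν) := by
      apply hGint.mono' hFaesm
      filter_upwards [haeprod] with p hp
      have hp1 : p.1 ∈ Icc (0:ℝ) T := ⟨(lt_trans hε.1 hp.1.1).le, le_trans hp.1.2 ht.2⟩
      have hb1 := (hB p.1 hp1 p.2).1
      have hb2 := (hB p.1 hp1 p.2).2
      have hw : |u₁ p.1 p.2 - u₂ p.1 p.2| ≤ 2*B := by
        calc |u₁ p.1 p.2 - u₂ p.1 p.2| ≤ |u₁ p.1 p.2| + |u₂ p.1 p.2| := abs_sub _ _
          _ ≤ 2*B := by linarith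
      have := pt_bound (u₁ p.1 p.2 - u₂ p.1 p.2) (u₁ p.1 p.2) (u₂ p.1 p.2)
        (deriv (u₁ p.1) p.2) (deriv (u₂ p.1) p.2)
        (deriv (deriv (u₁ p.1)) p.2) (deriv (deriv (u₂ p.1)) p.2) (2*B) B hw hb1 hb2
      rw [Real.norm_eq_abs]
      calc |F p| ≤ 4*(2*B+1)*(B+1)*(1 + (deriv (u₁ p.1) p.2)^2 + (deriv (u₂ p.1) p.2)^2
            + (deriv (deriv (u₁ p.1)) p.2)^2 + (deriv (deriv (u₂ p.1)) p.2)^2) := this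
        _ = Gb p := by simp only [hGb, hC0]
    -- FTC in time, for a.e. x
    have hftc : ∀ᵐ x ∂ν, (u₁ t x - u₂ t x)^2 - (u₁ ε x - u₂ ε x)^2
        = ∫ s, F (s, x) ∂μ := by
      filter_upwards [hFint.prod_left_ae] with x hx
      have hcx : Continuous (fun s => u₁ s x - u₂ s x) := by
        exact (hc₁.comp (continuous_id.prodMk continuous_const)).sub
          (hc₂.comp (continuous_id.prodMk continuous_const))
      have hii : IntervalIntegrable (fun s => F (s, x)) volume ε t := by
        rw [intervalIntegrable_iff, Set.uIoc_of_le hεt]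
        exact hx
      have := intervalIntegral.integral_eq_sub_of_hasDeriv_right_of_le hεt
        (f := fun s => (u₁ s x - u₂ s x)^2) (f' := fun s => F (s, x))
        ((hcx.pow 2).continuousOn)
        (fun s hs => by
          have hs' : s ∈ Ioo (0:ℝ) T := ⟨lt_trans hε.1 hs.1, lt_of_lt_of_le hs.2 ht.2⟩
          have hder := ((hde₁ s hs' x).fun_sub (hde₂ s hs' x)).fun_pow 2
          have hder' : HasDerivAt (fun r => (u₁ r x - u₂ r x)^2) (F (s, x)) s := by
            refine hder.congr_deriv ?_
            rw [hF]
            norm_num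
          exact hder'.hasDerivWithinAt)
        hii
      rw [intervalIntegral.integral_of_le hεt] at this
      rw [← this]
    -- assemble via Fubini
    have hEt : E t = ∫ x, (u₁ t x - u₂ t x)^2 ∂ν := by
      simp only [hEdef]
      rw [intervalIntegral.integral_of_le Real.two_pi_pos.le]
    have hEε : E ε = ∫ x, (u₁ ε x - u₂ ε x)^2 ∂ν := by
      simp only [hEdef]
      rw [intervalIntegral.integral_of_le Real.two_pi_pos.le]
    have hit : Integrable (fun x => (u₁ t x - u₂ t x)^2) ν := by
      apply Continuous.integrableOn_Ioc
      exact ((hc₁.comp (continuous_const.prodMk continuous_id)).sub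
        (hc₂.comp (continuous_const.prodMk continuous_id))).pow 2
    have hiε : Integrable (fun x => (u₁ ε x - u₂ ε x)^2) ν := by
      apply Continuous.integrableOn_Ioc
      exact ((hc₁.comp (continuous_const.prodMk continuous_id)).sub
        (hc₂.comp (continuous_const.prodMk continuous_id))).pow 2
    have hkey : E t - E ε = ∫ s, (∫ x, F (s, x) ∂ν) ∂μ := by
      rw [hEt, hEε, ← MeasureTheory.integral_sub hit hiε]
      rw [MeasureTheory.integral_congr_ae hftc]
      exact (MeasureTheory.integral_integral_swap hFint).symm
    rw [hkey]
    -- pointwise energy-rate bound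
    have hgE2 : IntegrableOn (fun s => g s * E s) (Ioc ε t) volume := by
      have hgE : IntervalIntegrable (fun s => g s * E s) volume 0 T :=
        hintg.mul_continuousOn hEcont.continuousOn
      have := hgE.mono_set (show uIcc ε t ⊆ uIcc (0:ℝ) T by
        rw [Set.uIcc_of_le hεt, Set.uIcc_of_le hT.le]
        exact Icc_subset_Icc hε.1.le ht.2)
      rw [intervalIntegrable_iff, Set.uIoc_of_le hεt] at this
      exact this
    have hmono : (∫ s, (∫ x, F (s, x) ∂ν) ∂μ) ≤ ∫ s, g s * E s ∂μ := by
      apply MeasureTheory.setIntegral_mono_on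
      · exact hFint.integral_prod_left
      · exact hgE2
      · exact measurableSet_Ioc
      · intro s hs
        have hreg1 := hreg₁ s (hsmem hs)
        have hreg2 := hreg₂ s (hsmem hs)
        have hp1 : Function.Periodic (u₁ s) (2*π) := fun y => hper₁ s y
        have hp2 : Function.Periodic (u₂ s) (2*π) := fun y => hper₂ s y
        have herb := energy_rate_bound hreg1 hreg2 hp1 hp2
        have hform : (∫ x, F (s, x) ∂ν)
            = ∫ x in (0:ℝ)..(2*π), 2*(u₁ s x - u₂ s x)*((deriv (deriv (u₁ s)) x
              + u₁ s x * deriv (u₁ s) x) - (deriv (deriv (u₂ s)) x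
              + u₂ s x * deriv (u₂ s) x)) := by
          rw [intervalIntegral.integral_of_le Real.two_pi_pos.le]
        rw [hform]
        exact le_trans herb (le_of_eq (by simp only [hgdef, hEdef]))
    refine le_trans hmono (le_of_eq ?_)
    rw [intervalIntegral.integral_of_le hεt]

  -- integral inequality on [0, T]
  have hineq : ∀ t ∈ Icc (0:ℝ) T, E t ≤ ∫ s in (0:ℝ)..t, g s * E s := by
    intro t ht
    rcases eq_or_lt_of_le ht.1 with h0 | h0
    · rw [← h0]
      simp only [intervalIntegral.integral_same]
      exact le_of_eq hE0
    · have hgE : IntervalIntegrable (fun s => g s * E s) volume 0 T :=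
        hintg.mul_continuousOn hEcont.continuousOn
      have hstep : ∀ ε ∈ Ioo (0:ℝ) t, E t ≤ E ε + ∫ s in (0:ℝ)..t, g s * E s := by
        intro ε hε
        have h1 : IntervalIntegrable (fun s => g s * E s) volume 0 ε := hgE.mono_set (by
          rw [Set.uIcc_of_le hε.1.le, Set.uIcc_of_le hT.le]
          exact Icc_subset_Icc le_rfl (le_trans hε.2.le ht.2))
        have h2 : IntervalIntegrable (fun s => g s * E s) volume ε t := hgE.mono_set (by
          rw [Set.uIcc_of_le hε.2.le, Set.uIcc_of_le hT.le]
          exact Icc_subset_Icc hε.1.le ht.2)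
        have hsplit : (∫ s in (0:ℝ)..t, g s * E s)
            = (∫ s in (0:ℝ)..ε, g s * E s) + ∫ s in ε..t, g s * E s :=
          (intervalIntegral.integral_add_adjacent_intervals h1 h2).symm
        have h0ε : 0 ≤ ∫ s in (0:ℝ)..ε, g s * E s :=
          intervalIntegral.integral_nonneg hε.1.le (fun s _ => mul_nonneg (hgnn s) (hEnn s))
        have := hdiff t ⟨h0, ht.2⟩ ε hε
        rw [hsplit]
        linarith
      have h00 : Filter.Tendsto E (nhdsWithin 0 (Ioi 0)) (nhds 0) := by
        have := (hEcont.tendsto 0).mono_left (nhdsWithin_le_nhds (s := Ioi (0:ℝ)))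
        rwa [hE0] at this
      have hten : Filter.Tendsto (fun ε => E ε + ∫ s in (0:ℝ)..t, g s * E s)
          (nhdsWithin 0 (Ioi 0)) (nhds (∫ s in (0:ℝ)..t, g s * E s)) := by
        have := h00.add (tendsto_const_nhds
          (x := ∫ s in (0:ℝ)..t, g s * E s) (f := nhdsWithin 0 (Ioi (0:ℝ))))
        rwa [zero_add] at this
      apply ge_of_tendsto hten
      filter_upwards [Ioo_mem_nhdsGT_of_mem (Set.mem_Ico.mpr ⟨le_refl (0:ℝ), h0⟩)] with ε hε
      exact hstep ε hε
  -- Gronwall: the energy vanishes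
  have hEzero := gronwall_aux T E g hEcont hEnn hgnn hintg hineq
  -- conclusion
  intro t ht x
  have hv : Continuous (fun y => u₁ t y - u₂ t y) := by
    exact (hc₁.comp (continuous_const.prodMk continuous_id)).sub
      (hc₂.comp (continuous_const.prodMk continuous_id))
  have hz : ∀ y ∈ Icc (0:ℝ) (2*π), u₁ t y - u₂ t y = 0 := by
    apply zero_of_integral_sq hv
    have := hEzero t ht
    simpa only [hEdef] using this
  have hpw : Function.Periodic (fun y => u₁ t y - u₂ t y) (2*π) := fun y => by
    show u₁ t (y + 2*π) - u₂ t (y + 2*π) = u₁ t y - u₂ t y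
    rw [hper₁, hper₂]
  obtain ⟨y, hy, hxy⟩ := hpw.exists_mem_Ico₀ Real.two_pi_pos x
  have := hz y ⟨hy.1, hy.2.le⟩
  have hx0 : u₁ t x - u₂ t x = 0 := by rw [hxy, this]
  linarith
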